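/- Let r = 4/3 and let λ(t) = (3/2)(1 + tanh(3rt/2)) = (3/2)(1 + tanh(2t)). Then the curve γ(t) = (−λ(t)/3 − 1, λ(t)) is a solution of the system ẋ = (x + y)² − 1, ẏ = r·y·(3 − y); its image lies on the line x = −y/3 − 1; γ(t) → (−1, 0) as t → −∞ and γ(t) → (−2, 3) as t → +∞. In particular, at the critical rate r_c = 4/3 there is a heteroclinic connection between the saddle equilibria (−1, 0) and (−2, 3). -/

import Mathlib

open Real Filter

lemma hasDerivAt_tanh' (x : ℝ) : HasDerivAt Real.tanh (1 - Real.tanh x ^ 2) x := by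
  have hc : Real.cosh x ≠ 0 := (Real.cosh_pos x).ne'
  have h := (Real.hasDerivAt_sinh x).div (Real.hasDerivAt_cosh x) hc
  have heq : (Real.cosh x * Real.cosh x - Real.sinh x * Real.sinh x) / Real.cosh x ^ 2
      = 1 - Real.tanh x ^ 2 := by
    rw [Real.tanh_eq_sinh_div_cosh]
    have := Real.cosh_sq_sub_sinh_sq x
    field_simp
  rw [heq] at h
  exact h.congr_of_eventuallyEq (Filter.Eventually.of_forall fun y =>
    (Real.tanh_eq_sinh_div_cosh y))

lemma tanh_eq_exp (x : ℝ) :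
    Real.tanh x = (Real.exp (2 * x) - 1) / (Real.exp (2 * x) + 1) := by
  rw [Real.tanh_eq_sinh_div_cosh, Real.sinh_eq, Real.cosh_eq, Real.exp_neg, two_mul,
    Real.exp_add]
  have h : Real.exp x ≠ 0 := (Real.exp_pos x).ne'
  have h2 : Real.exp x * Real.exp x + 1 ≠ 0 := by positivity
  field_simp

lemma tanh_tendsto_atTop : Tendsto Real.tanh atTop (nhds 1) := by
  have he : Tendsto (fun x : ℝ => Real.exp (2 * x) + 1) atTop atTop :=
    (Real.tendsto_exp_atTop.comp (tendsto_id.const_mul_atTop two_pos)).atTop_add tendsto_const_nhds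
  have h : Tendsto (fun x : ℝ => 1 - 2 / (Real.exp (2 * x) + 1)) atTop (nhds 1) := by
    have := Filter.Tendsto.div_atTop (tendsto_const_nhds (x := (2:ℝ))) he
    simpa using tendsto_const_nhds.sub this
  refine h.congr fun x => ?_
  rw [tanh_eq_exp]
  have h2 : Real.exp (2 * x) + 1 ≠ 0 := by positivity
  field_simp
  ring

lemma tanh_tendsto_atBot : Tendsto Real.tanh atBot (nhds (-1)) := by
  have he : Tendsto (fun x : ℝ => Real.exp (2 * x)) atBot (nhds 0) :=
    Real.tendsto_exp_atBot.comp (tendsto_id.const_mul_atBot two_pos)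
  have hn : Tendsto (fun x : ℝ => Real.exp (2 * x) - 1) atBot (nhds (-1)) := by
    simpa using he.sub (tendsto_const_nhds (x := (1:ℝ)))
  have hd : Tendsto (fun x : ℝ => Real.exp (2 * x) + 1) atBot (nhds 1) := by
    simpa using he.add (tendsto_const_nhds (x := (1:ℝ)))
  have h := hn.div hd one_ne_zero
  simp only [div_one] at h
  exact h.congr fun x => (tanh_eq_exp x).symm

/-- At the critical rate `r = 4/3`, the curve `γ(t) = (−λ(t)/3 − 1, λ(t))` with
`λ(t) = (3/2)(1 + tanh(2t))` is a solution of `ẋ = (x + y)² − 1, ẏ = r·y·(3 − y)`, its image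
lies on the line `x = −y/3 − 1`, and `γ(t) → (−1, 0)` as `t → −∞` and `γ(t) → (−2, 3)` as
`t → +∞`: a heteroclinic connection between the saddles `(−1, 0)` and `(−2, 3)`. -/
theorem heteroclinic_at_critical_rate :
    let r : ℝ := 4 / 3
    let lam : ℝ → ℝ := fun t => (3 / 2) * (1 + Real.tanh (2 * t))
    let γ : ℝ → ℝ × ℝ := fun t => (-(lam t) / 3 - 1, lam t)
    (∀ t : ℝ, HasDerivAt γ
      (((γ t).1 + (γ t).2) ^ 2 - 1, r * (γ t).2 * (3 - (γ t).2)) t) ∧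
    (∀ t : ℝ, (γ t).1 = -(γ t).2 / 3 - 1) ∧
    Filter.Tendsto γ Filter.atBot (nhds (-1, 0)) ∧
    Filter.Tendsto γ Filter.atTop (nhds (-2, 3)) := by
  intro r lam γ
  have hlam : ∀ t : ℝ, HasDerivAt lam (3 * (1 - Real.tanh (2 * t) ^ 2)) t := by
    intro t
    have hT : HasDerivAt (fun t : ℝ => Real.tanh (2 * t))
        ((1 - Real.tanh (2 * t) ^ 2) * 2) t :=
      (hasDerivAt_tanh' (2 * t)).comp t (by simpa using (hasDerivAt_id t).const_mul 2)
    have := ((hT.const_add 1).const_mul (3 / 2 : ℝ))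
    exact this.congr_deriv (by ring)
  refine ⟨?_, ?_, ?_, ?_⟩
  · intro t
    set s := Real.tanh (2 * t) with hs
    have h1 : HasDerivAt (fun t => -(lam t) / 3 - 1) (-(3 * (1 - s ^ 2)) / 3) t :=
      (((hlam t).neg).div_const 3).sub_const 1
    have h := h1.prodMk (hlam t)
    convert h using 2 <;> simp only [γ, lam] <;> ring
  · intro t; rfl
  · have hl : Tendsto lam atBot (nhds 0) := by
      have hT : Tendsto (fun t : ℝ => Real.tanh (2 * t)) atBot (nhds (-1)) :=
        tanh_tendsto_atBot.comp (tendsto_id.const_mul_atBot two_pos)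
      have := (hT.const_add 1).const_mul (3 / 2 : ℝ)
      simpa using this
    have h1 : Tendsto (fun t => -(lam t) / 3 - 1) atBot (nhds (-1)) := by
      have := ((hl.neg).div_const 3).sub_const 1
      simpa using this
    exact h1.prodMk_nhds hl
  · have hl : Tendsto lam atTop (nhds 3) := by
      have hT : Tendsto (fun t : ℝ => Real.tanh (2 * t)) atTop (nhds 1) :=
        tanh_tendsto_atTop.comp (tendsto_id.const_mul_atTop two_pos)
      have := (hT.const_add 1).const_mul (3 / 2 : ℝ)
      norm_num at this
      exact this
    have h1 : Tendsto (fun t => -(lam t) / 3 - 1) atTop (nhds (-2)) := by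
      have := ((hl.neg).div_const 3).sub_const 1
      norm_num at this
      exact this
    exact h1.prodMk_nhds hl
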